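/- The matrix L' = L + cos²(2π/5)·(F¹³ + F²⁴ + F³⁵ + F¹⁴ + F²⁵), where L = M(cos²(4π/5), cos²(2π/5)) and F^{ij} ∈ S⁵₊ has F^{ij}_{ii} = F^{ij}_{jj} = 1, F^{ij}_{ij} = F^{ij}_{ji} = −1 and all other entries 0, satisfies ⟨H, L'⟩ = 5(2−√5)/2 < 0 for the Horn matrix H = M(−1,1); consequently L' is not completely positive, even though L is completely positive semidefinite and every partial sum in the definition of L' is entrywise nonnegative. -/

import Mathlib

open Matrix Real

def CompletelyPSD {n : ℕ} (A : Matrix (Fin n) (Fin n) ℝ) : Prop :=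
  ∃ (d : ℕ) (X : Fin n → Matrix (Fin d) (Fin d) ℝ),
    1 ≤ d ∧ (∀ i, (X i).PosSemidef) ∧ ∀ i j, A i j = ((X i) * (X j)).trace

def CompletelyPositive {n : ℕ} (A : Matrix (Fin n) (Fin n) ℝ) : Prop :=
  ∃ (d : ℕ) (x : Fin n → Fin d → ℝ),
    1 ≤ d ∧ (∀ i k, 0 ≤ x i k) ∧ ∀ i j, A i j = ∑ k, x i k * x j k

def Mcirc (b c : ℝ) : Matrix (Fin 5) (Fin 5) ℝ :=
  Matrix.of fun i j =>
    if i = j then 1 else if i - j = (1 : Fin 5) ∨ i - j = (4 : Fin 5) then b else c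

/-- The psd matrix `F^{ij}` with entries `1` at `(i,i)`, `(j,j)`, `−1` at `(i,j)`, `(j,i)`,
and `0` elsewhere. -/
def Fm (i j : Fin 5) : Matrix (Fin 5) (Fin 5) ℝ :=
  Matrix.of fun a b =>
    if (a = i ∧ b = i) ∨ (a = j ∧ b = j) then 1
    else if (a = i ∧ b = j) ∨ (a = j ∧ b = i) then -1 else 0

noncomputable def Lmat : Matrix (Fin 5) (Fin 5) ℝ :=
  Mcirc (Real.cos (4 * π / 5) ^ 2) (Real.cos (2 * π / 5) ^ 2)

noncomputable def cc : ℝ := Real.cos (2 * π / 5) ^ 2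

/-- `L' = L + cos²(2π/5)(F¹³ + F²⁴ + F³⁵ + F¹⁴ + F²⁵)` (indices 1..5, here 0..4). -/
noncomputable def Lmat' : Matrix (Fin 5) (Fin 5) ℝ :=
  Lmat + cc • (Fm 0 2 + Fm 1 3 + Fm 2 4 + Fm 0 3 + Fm 1 4)

/- ### Auxiliary material -/

noncomputable def uvec (i : Fin 5) : Fin 2 → ℝ :=
  ![Real.cos (4 * π * i.val / 5), Real.sin (4 * π * i.val / 5)]

noncomputable def Xmat (i : Fin 5) : Matrix (Fin 2) (Fin 2) ℝ :=
  Matrix.of fun a b => uvec i a * uvec i b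

lemma Xmat_psd (i : Fin 5) : (Xmat i).PosSemidef := by
  constructor
  · ext a b; simp [Xmat, Matrix.conjTranspose_apply, mul_comm]
  · intro x
    simp [Xmat, Matrix.mulVec, dotProduct, Finsupp.sum_fintype, Fin.sum_univ_two]
    nlinarith [sq_nonneg (x 0 * uvec i 0 + x 1 * uvec i 1)]

lemma trace_eq (i j : Fin 5) : ((Xmat i) * (Xmat j)).trace
    = Real.cos (4 * π * i.val / 5 - 4 * π * j.val / 5) ^ 2 := by
  rw [Real.cos_sub]
  simp [Xmat, Matrix.trace, Matrix.mul_apply, Fin.sum_univ_two, Matrix.diag, uvec]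
  ring

lemma cs (x y : ℝ) (n : ℤ) (h : x = y + n * (2 * π) ∨ x = -y + n * (2 * π)) :
    Real.cos x ^ 2 = Real.cos y ^ 2 := by
  rcases h with h | h <;> rw [h, Real.cos_add_int_mul_two_pi]
  rw [Real.cos_neg]

set_option maxHeartbeats 1000000 in
set_option linter.unusedTactic false in
lemma Lmat_entry (i j : Fin 5) : Lmat i j = ((Xmat i) * (Xmat j)).trace := by
  rw [trace_eq]
  fin_cases i <;> fin_cases j <;>
    simp (config := { decide := true }) [Lmat, Mcirc] <;> symm <;>
    first
      | (apply cs _ _ 1; left; push_cast; ring1)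
      | (apply cs _ _ 1; right; push_cast; ring1)
      | (apply cs _ _ 2; left; push_cast; ring1)
      | (apply cs _ _ 2; right; push_cast; ring1)
      | (apply cs _ _ (-1); left; push_cast; ring1)
      | (apply cs _ _ (-1); right; push_cast; ring1)
      | (apply cs _ _ (-2); left; push_cast; ring1)
      | (apply cs _ _ (-2); right; push_cast; ring1)
      | (apply cs _ _ 0; left; push_cast; ring1)
      | (apply cs _ _ 0; right; push_cast; ring1)

lemma cos2_val : Real.cos (2 * π / 5) = (Real.sqrt 5 - 1) / 4 := by
  have h1 : Real.cos (π / 5) = (1 + Real.sqrt 5) / 4 := Real.cos_pi_div_five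
  have h5 : Real.sqrt 5 ^ 2 = 5 := Real.sq_sqrt (by norm_num)
  have h : (2 * π / 5) = 2 * (π / 5) := by ring
  rw [h, Real.cos_two_mul, h1]; nlinarith [h5]

lemma cos4_val : Real.cos (4 * π / 5) = -(1 + Real.sqrt 5) / 4 := by
  have h5 : Real.sqrt 5 ^ 2 = 5 := Real.sq_sqrt (by norm_num)
  have h : (4 * π / 5) = 2 * (2 * π / 5) := by ring
  rw [h, Real.cos_two_mul, cos2_val]; nlinarith [h5]

lemma horn_copos (v : Fin 5 → ℝ) (hv : ∀ i, 0 ≤ v i) :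
    0 ≤ ∑ a, ∑ b, Mcirc (-1) 1 a b * (v a * v b) := by
  simp (config := { decide := true }) [Fin.sum_univ_five, Mcirc]
  rcases le_total (v 4) (v 3) with h | h
  · nlinarith [sq_nonneg (v 0 - v 1 + v 2 - v 3 + v 4),
      mul_nonneg (hv 1) (hv 4), mul_nonneg (hv 0) (sub_nonneg.2 h)]
  · nlinarith [sq_nonneg (v 2 - v 1 + v 0 - v 4 + v 3),
      mul_nonneg (hv 1) (hv 3), mul_nonneg (hv 2) (sub_nonneg.2 h)]


lemma ccnn : 0 ≤ cc := sq_nonneg _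

lemma Lmat_ge (a b : Fin 5) : cc ≤ Lmat a b := by
  have h5 : Real.sqrt 5 ^ 2 = 5 := Real.sq_sqrt (by norm_num)
  have hs : 0 ≤ Real.sqrt 5 := Real.sqrt_nonneg 5
  have k1 : cc ≤ Real.cos (4 * π / 5) ^ 2 := by
    rw [cc, cos2_val, cos4_val]; nlinarith
  have k2 : cc ≤ 1 := by rw [cc, cos2_val]; nlinarith
  have k3 : cc = Real.cos (2 * π / 5) ^ 2 := rfl
  unfold Lmat Mcirc
  simp only [Matrix.of_apply]
  split_ifs <;> linarith

set_option maxHeartbeats 1000000 in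
lemma hSall (a b : Fin 5) :
    (-1:ℝ) ≤ (Fm 0 2) a b ∧
    (-1:ℝ) ≤ (Fm 0 2 + Fm 1 3) a b ∧
    (-1:ℝ) ≤ (Fm 0 2 + Fm 1 3 + Fm 2 4) a b ∧
    (-1:ℝ) ≤ (Fm 0 2 + Fm 1 3 + Fm 2 4 + Fm 0 3) a b ∧
    (-1:ℝ) ≤ (Fm 0 2 + Fm 1 3 + Fm 2 4 + Fm 0 3 + Fm 1 4) a b := by
  fin_cases a <;> fin_cases b <;>
    simp (config := { decide := true }) [Fm, Matrix.add_apply] <;> norm_num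

lemma nn_of (S : Matrix (Fin 5) (Fin 5) ℝ) (a b : Fin 5) (hS : (-1:ℝ) ≤ S a b) :
    0 ≤ (Lmat + cc • S) a b := by
  have h1 := Lmat_ge a b
  have h2 := mul_nonneg ccnn (by linarith : (0:ℝ) ≤ 1 + S a b)
  simp only [Matrix.add_apply, Matrix.smul_apply, smul_eq_mul]
  nlinarith [ccnn]

set_option maxHeartbeats 1000000 in
lemma hval_sum : (∑ a : Fin 5, ∑ b : Fin 5, Mcirc (-1) 1 a b * Lmat' a b)
    = 5 * (2 - Real.sqrt 5) / 2 := by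
  simp (config := { decide := true }) [Fin.sum_univ_five, Mcirc, Lmat', Lmat, Fm, cc,
    Matrix.add_apply, Matrix.smul_apply, smul_eq_mul, cos2_val, cos4_val]
  ring

/-- `⟨H,L'⟩ = 5(2−√5)/2 < 0`, hence `L'` is not completely positive, even though `L` is
completely positive semidefinite and every partial sum in the definition of `L'` is
entrywise nonnegative. -/
theorem Lprime_not_cp :
    CompletelyPSD Lmat ∧
    (∀ a b, 0 ≤ (Lmat + cc • Fm 0 2) a b) ∧
    (∀ a b, 0 ≤ (Lmat + cc • (Fm 0 2 + Fm 1 3)) a b) ∧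
    (∀ a b, 0 ≤ (Lmat + cc • (Fm 0 2 + Fm 1 3 + Fm 2 4)) a b) ∧
    (∀ a b, 0 ≤ (Lmat + cc • (Fm 0 2 + Fm 1 3 + Fm 2 4 + Fm 0 3)) a b) ∧
    (∀ a b, 0 ≤ Lmat' a b) ∧
    (∑ a : Fin 5, ∑ b : Fin 5, Mcirc (-1) 1 a b * Lmat' a b) = 5 * (2 - Real.sqrt 5) / 2 ∧
    (∑ a : Fin 5, ∑ b : Fin 5, Mcirc (-1) 1 a b * Lmat' a b) < 0 ∧
    ¬ CompletelyPositive Lmat' := by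
  have hneg : (∑ a : Fin 5, ∑ b : Fin 5, Mcirc (-1) 1 a b * Lmat' a b) < 0 := by
    rw [hval_sum]
    nlinarith [Real.sq_sqrt (show (0:ℝ) ≤ 5 by norm_num), Real.sqrt_nonneg 5]
  refine ⟨⟨2, Xmat, by norm_num, Xmat_psd, Lmat_entry⟩,
    fun a b => nn_of _ a b (hSall a b).1,
    fun a b => nn_of _ a b (hSall a b).2.1,
    fun a b => nn_of _ a b (hSall a b).2.2.1,
    fun a b => nn_of _ a b (hSall a b).2.2.2.1,
    fun a b => nn_of _ a b (hSall a b).2.2.2.2,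
    hval_sum, hneg, ?_⟩
  rintro ⟨d, x, hd, hx, hA⟩
  have hsum : ∑ k : Fin d, ∑ a : Fin 5, ∑ b : Fin 5, Mcirc (-1) 1 a b * (x a k * x b k)
      = ∑ a : Fin 5, ∑ b : Fin 5, Mcirc (-1) 1 a b * Lmat' a b := by
    rw [Finset.sum_comm]
    refine Finset.sum_congr rfl fun a _ => ?_
    rw [Finset.sum_comm]
    refine Finset.sum_congr rfl fun b _ => ?_
    rw [← Finset.mul_sum, ← hA a b]
  have hnn : (0:ℝ) ≤ ∑ k : Fin d, ∑ a : Fin 5, ∑ b : Fin 5,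
      Mcirc (-1) 1 a b * (x a k * x b k) :=
    Finset.sum_nonneg fun k _ => horn_copos (fun i => x i k) (fun i => hx i k)
  rw [hsum] at hnn
  linarith
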